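/- Let x : ℤ → ℤ be any integer-valued sequence and let i ∈ ℤ. Then an integer j is a descendant of i under the record map R_x if and only if j < i and y_x(k,i) ≥ 0 for every integer k with j ≤ k < i. -/
import Mathlib


attribute [local instance] Classical.propDecidable

/-- The record map of an integer sequence: `n` is sent to the least integer `j > n`
with `∑_{l=n}^{j-1} x l ≥ 0` if such `j` exists, and to `n` otherwise. -/
noncomputable def recordMap (x : ℤ → ℤ) (n : ℤ) : ℤ :=
  if ∃ j : ℤ, n < j ∧ 0 ≤ ∑ l ∈ Finset.Ico n j, x l then
    sInf {j : ℤ | n < j ∧ 0 ≤ ∑ l ∈ Finset.Ico n j, x l}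
  else n

private lemma sum_Ico_split (x : ℤ → ℤ) {a b c : ℤ} (hab : a ≤ b) (hbc : b ≤ c) :
    ∑ l ∈ Finset.Ico a b, x l + ∑ l ∈ Finset.Ico b c, x l = ∑ l ∈ Finset.Ico a c, x l := by
  rw [← Finset.sum_union (Finset.Ico_disjoint_Ico_consecutive a b c),
    Finset.Ico_union_Ico_eq_Ico hab hbc]

private lemma recordMap_base (x : ℤ → ℤ) {j i : ℤ} (hne : j ≠ i) (h : recordMap x j = i) :
    j < i ∧ ∀ k : ℤ, j ≤ k → k < i → 0 ≤ ∑ l ∈ Finset.Ico k i, x l := by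
  unfold recordMap at h
  split_ifs at h with hex
  · set S : Set ℤ := {j' : ℤ | j < j' ∧ 0 ≤ ∑ l ∈ Finset.Ico j j', x l} with hS
    have hbdd : BddBelow S := ⟨j, fun a ha => le_of_lt ha.1⟩
    have hmem : i ∈ S := h ▸ Int.csInf_mem hex hbdd
    refine ⟨hmem.1, fun k hk1 hk2 => ?_⟩
    rcases eq_or_lt_of_le hk1 with rfl | hlt
    · exact hmem.2
    · have hkS : k ∉ S := by
        apply notMem_of_lt_csInf _ hbdd
        rw [h]; exact hk2
      have hneg : ∑ l ∈ Finset.Ico j k, x l < 0 := by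
        by_contra hc
        exact hkS ⟨hlt, le_of_not_gt hc⟩
      have hsplit := sum_Ico_split x (le_of_lt hlt) (le_of_lt hk2)
      linarith [hmem.2]
  · exact absurd h hne

private lemma recordMap_fwd (x : ℤ → ℤ) (i : ℤ) : ∀ m : ℕ, ∀ j : ℤ, j ≠ i →
    (recordMap x)^[m+1] j = i →
    j < i ∧ ∀ k : ℤ, j ≤ k → k < i → 0 ≤ ∑ l ∈ Finset.Ico k i, x l := by
  intro m
  induction m with
  | zero =>
    intro j hne h
    exact recordMap_base x hne (by simpa using h)
  | succ m ih =>
    intro j hne h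
    rw [Function.iterate_succ_apply] at h
    by_cases hji : recordMap x j = i
    · exact recordMap_base x hne hji
    · have hjj : recordMap x j ≠ j := by
        intro hfix
        have hfixiter : (recordMap x)^[m+1] j = j := Function.iterate_fixed hfix (m+1)
        rw [hfix, hfixiter] at h
        exact hne h
      have hbase := recordMap_base x (Ne.symm hjj) rfl
      have hih := ih (recordMap x j) hji h
      refine ⟨lt_trans hbase.1 hih.1, fun k hk1 hk2 => ?_⟩
      by_cases hkj' : recordMap x j ≤ k
      · exact hih.2 k hkj' hk2
      · push_neg at hkj'
        have h1 := hbase.2 k hk1 hkj'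
        have h2 := hih.2 (recordMap x j) le_rfl hih.1
        have hsplit := sum_Ico_split x (le_of_lt hkj') (le_of_lt hih.1)
        linarith

private lemma recordMap_bwd (x : ℤ → ℤ) (i : ℤ) : ∀ n : ℕ, ∀ j : ℤ, (i - j).toNat = n → j < i →
    (∀ k : ℤ, j ≤ k → k < i → 0 ≤ ∑ l ∈ Finset.Ico k i, x l) →
    ∃ m : ℕ, 1 ≤ m ∧ (recordMap x)^[m] j = i := by
  intro n
  induction n using Nat.strong_induction_on with
  | _ n ih =>
    intro j hn hji hsum
    have hiS : i ∈ {j' : ℤ | j < j' ∧ 0 ≤ ∑ l ∈ Finset.Ico j j', x l} :=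
      ⟨hji, hsum j le_rfl hji⟩
    have hex : ∃ j' : ℤ, j < j' ∧ 0 ≤ ∑ l ∈ Finset.Ico j j', x l := ⟨i, hiS⟩
    have hmap : recordMap x j = sInf {j' : ℤ | j < j' ∧ 0 ≤ ∑ l ∈ Finset.Ico j j', x l} := by
      unfold recordMap; rw [if_pos hex]
    have hbdd : BddBelow {j' : ℤ | j < j' ∧ 0 ≤ ∑ l ∈ Finset.Ico j j', x l} :=
      ⟨j, fun a ha => le_of_lt ha.1⟩
    have hmem := Int.csInf_mem (⟨i, hiS⟩ : Set.Nonempty _) hbdd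
    have hle : recordMap x j ≤ i := by rw [hmap]; exact csInf_le hbdd hiS
    have hgt : j < recordMap x j := by rw [hmap]; exact hmem.1
    rcases eq_or_lt_of_le hle with heq | hlt
    · exact ⟨1, le_refl 1, by simpa using heq⟩
    · have hsum' : ∀ k : ℤ, recordMap x j ≤ k → k < i → 0 ≤ ∑ l ∈ Finset.Ico k i, x l :=
        fun k hk1 hk2 => hsum k (le_of_lt (lt_of_lt_of_le hgt hk1)) hk2
      have hlt' : (i - recordMap x j).toNat < n := by omega
      obtain ⟨m, hm1, hm2⟩ := ih _ hlt' (recordMap x j) rfl hlt hsum'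
      exact ⟨m+1, by omega, by rw [Function.iterate_succ_apply]; exact hm2⟩

/-- An integer `j` is a descendant of `i` under the record map iff `j < i` and
the sums `y_x(k,i)` are nonnegative for every `k` with `j ≤ k < i`. -/
theorem descendants_iff (x : ℤ → ℤ) (i j : ℤ) :
    (j ≠ i ∧ ∃ m : ℕ, 1 ≤ m ∧ (recordMap x)^[m] j = i) ↔
      (j < i ∧ ∀ k : ℤ, j ≤ k → k < i → 0 ≤ ∑ l ∈ Finset.Ico k i, x l) := by
  constructor
  · rintro ⟨hne, m, hm1, hm2⟩
    obtain ⟨m', rfl⟩ : ∃ m', m = m' + 1 := ⟨m - 1, by omega⟩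
    exact recordMap_fwd x i m' j hne hm2
  · rintro ⟨hji, hsum⟩
    obtain ⟨m, hm1, hm2⟩ := recordMap_bwd x i (i - j).toNat j rfl hji hsum
    exact ⟨ne_of_lt hji, m, hm1, hm2⟩
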